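/- κ d J_rΛ^k(ℝ^n) = J_rΛ^k(ℝ^n): applying the exterior derivative followed by the Koszul operator to the space J_rΛ^k(ℝ^n) recovers the same space. -/
import Mathlib


open MvPolynomial

/-- Polynomial differential forms on `ℝ^n`: a family of polynomial coefficients indexed by
subsets `σ ⊆ {1,…,n}`; a `k`-form is supported on sets of cardinality `k`. -/
abbrev PolyForm (n : ℕ) := Finset (Fin n) → MvPolynomial (Fin n) ℝ

/-- The sign `(-1)^{#{j ∈ σ : j < i}}`. -/
noncomputable def sgn {n : ℕ} (σ : Finset (Fin n)) (i : Fin n) : MvPolynomial (Fin n) ℝ :=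
  (-1) ^ (σ.filter (fun j => j < i)).card

/-- The exterior derivative `d`. -/
noncomputable def extD (n : ℕ) : PolyForm n →ₗ[ℝ] PolyForm n where
  toFun ω := fun σ => ∑ i ∈ σ, sgn σ i * pderiv i (ω (σ.erase i))
  map_add' ω η := by
    funext σ
    simp [Pi.add_apply, mul_add, Finset.sum_add_distrib]
  map_smul' c ω := by
    funext σ
    simp [Pi.smul_apply, Finset.smul_sum, mul_smul_comm]

/-- The Koszul operator `κ` (contraction with the position vector field). -/
noncomputable def koszul (n : ℕ) : PolyForm n →ₗ[ℝ] PolyForm n where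
  toFun ω := fun σ => ∑ i ∈ σᶜ, sgn σ i * X i * ω (insert i σ)
  map_add' ω η := by
    funext σ
    simp [Pi.add_apply, mul_add, Finset.sum_add_distrib]
  map_smul' c ω := by
    funext σ
    simp [Pi.smul_apply, Finset.smul_sum, mul_smul_comm]

/-- The space of (polynomial) differential `k`-forms: families supported on index sets of
cardinality `k`. -/
noncomputable def Lambda (n k : ℕ) : Submodule ℝ (PolyForm n) where
  carrier := {ω | ∀ σ, σ.card ≠ k → ω σ = 0}
  zero_mem' := fun σ _ => rfl
  add_mem' := fun ha hb σ h => by simp only [Pi.add_apply, ha σ h, hb σ h, add_zero]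
  smul_mem' := fun c ω h σ hσ => by simp only [Pi.smul_apply, h σ hσ, smul_zero]

/-- The form monomial `x^α dx_σ`. -/
noncomputable def formMonomial {n : ℕ} (α : Fin n →₀ ℕ) (σ : Finset (Fin n)) : PolyForm n :=
  fun τ => if τ = σ then monomial α 1 else 0

/-- The (total) degree `|α|` of a multi-index. -/
def mdeg {n : ℕ} (α : Fin n →₀ ℕ) : ℕ := α.sum fun _ m => m

/-- The linear degree of the form monomial `x^α dx_σ`: the number of `i ∉ σ` with `α i = 1`. -/
def ldeg {n : ℕ} (α : Fin n →₀ ℕ) (σ : Finset (Fin n)) : ℕ :=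
  ((σᶜ).filter fun i => α i = 1).card

/-- `H_rΛ^k(ℝ^n)`: `k`-forms with homogeneous degree-`r` polynomial coefficients. -/
noncomputable def Hspace (n r k : ℕ) : Submodule ℝ (PolyForm n) :=
  Submodule.span ℝ {ω | ∃ α σ, σ.card = k ∧ mdeg α = r ∧ ω = formMonomial α σ}

/-- `P_rΛ^k(ℝ^n)`: `k`-forms with polynomial coefficients of degree at most `r`. -/
noncomputable def Pspace (n r k : ℕ) : Submodule ℝ (PolyForm n) :=
  Submodule.span ℝ {ω | ∃ α σ, σ.card = k ∧ mdeg α ≤ r ∧ ω = formMonomial α σ}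

/-- `H_{r,l}Λ^k(ℝ^n)`: homogeneous degree-`r` `k`-forms of linear degree at least `l`. -/
noncomputable def Hl (n r l k : ℕ) : Submodule ℝ (PolyForm n) :=
  Submodule.span ℝ
    {ω | ∃ α σ, σ.card = k ∧ mdeg α = r ∧ l ≤ ldeg α σ ∧ ω = formMonomial α σ}

/-- `J_rΛ^k(ℝ^n) := Σ_{l ≥ 1} κ H_{r+l-1, l}Λ^{k+1}(ℝ^n)` (here `l` is reindexed as `l+1`). -/
noncomputable def Jspace (n r k : ℕ) : Submodule ℝ (PolyForm n) :=
  ⨆ l : ℕ, Submodule.map (koszul n) (Hl n (r + l) (l + 1) (k + 1))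

/-- The trimmed polynomial space `P_r^-Λ^k := P_{r-1}Λ^k ⊕ κ H_{r-1}Λ^{k+1}`. -/
noncomputable def PminusSpace (n r k : ℕ) : Submodule ℝ (PolyForm n) :=
  Pspace n (r - 1) k ⊔ Submodule.map (koszul n) (Hspace n (r - 1) (k + 1))

/-- The serendipity space `S_rΛ^k := P_rΛ^k + J_rΛ^k + d J_{r+1}Λ^{k-1}`
(the last summand being absent for `k = 0`). -/
noncomputable def Sspace (n r k : ℕ) : Submodule ℝ (PolyForm n) :=
  Pspace n r k ⊔ Jspace n r k ⊔
    (if k = 0 then ⊥ else Submodule.map (extD n) (Jspace n (r + 1) (k - 1)))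

/-- The trimmed serendipity space `S_r^-Λ^k := S_{r-1}Λ^k + κ S_{r-1}Λ^{k+1}`. -/
noncomputable def SminusSpace (n r k : ℕ) : Submodule ℝ (PolyForm n) :=
  Sspace n (r - 1) k ⊔ Submodule.map (koszul n) (Sspace n (r - 1) (k + 1))

section Aux

open Finset in
lemma sgn_mul_self {n : ℕ} (σ : Finset (Fin n)) (i : Fin n) : sgn σ i * sgn σ i = 1 := by
  unfold sgn
  rw [← pow_add]
  exact Even.neg_one_pow ⟨_, rfl⟩

lemma sgn_insert {n : ℕ} {σ : Finset (Fin n)} {j : Fin n} (i : Fin n) (h : j ∉ σ) :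
    sgn (insert j σ) i = (if j < i then -1 else 1) * sgn σ i := by
  unfold sgn
  rw [Finset.filter_insert]
  by_cases hij : j < i
  · rw [if_pos hij, if_pos hij,
      Finset.card_insert_of_notMem (fun hc => h (Finset.mem_filter.1 hc).1), pow_succ]
    ring
  · rw [if_neg hij, if_neg hij, one_mul]

lemma sgn_insert_self {n : ℕ} (σ : Finset (Fin n)) (i : Fin n) :
    sgn (insert i σ) i = sgn σ i := by
  unfold sgn
  rw [Finset.filter_insert, if_neg (lt_irrefl i)]

lemma sgn_erase_self {n : ℕ} (σ : Finset (Fin n)) (i : Fin n) :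
    sgn (σ.erase i) i = sgn σ i := by
  unfold sgn
  congr 1
  rw [Finset.filter_erase, Finset.erase_eq_of_notMem]
  simp

lemma sgn_skew_out {n : ℕ} {σ : Finset (Fin n)} {i j : Fin n}
    (hi : i ∉ σ) (hj : j ∉ σ) (hij : i ≠ j) :
    sgn σ i * sgn (insert i σ) j = -(sgn σ j * sgn (insert j σ) i) := by
  rw [sgn_insert j hi, sgn_insert i hj]
  rcases lt_or_gt_of_ne hij with h | h
  · rw [if_pos h, if_neg (asymm h)]; ring
  · rw [if_neg (asymm h), if_pos h]; ring

lemma sgn_skew_cross {n : ℕ} {σ : Finset (Fin n)} {i j : Fin n}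
    (hi : i ∈ σ) (hj : j ∉ σ) :
    sgn σ i * sgn (σ.erase i) j = -(sgn σ j * sgn (insert j σ) i) := by
  have hij : i ≠ j := fun h => hj (h ▸ hi)
  obtain ⟨τ, hτi, rfl⟩ : ∃ τ, i ∉ τ ∧ σ = insert i τ :=
    ⟨σ.erase i, Finset.notMem_erase i σ, (Finset.insert_erase hi).symm⟩
  have hjτ : j ∉ τ := fun h => hj (Finset.mem_insert_of_mem h)
  rw [Finset.erase_insert hτi, sgn_insert_self, sgn_insert j hτi,
    Finset.insert_comm, sgn_insert_self, sgn_insert i hjτ]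
  rcases lt_or_gt_of_ne hij with h | h
  · rw [if_pos h, if_neg (asymm h)]; ring
  · rw [if_neg (asymm h), if_pos h]; ring

lemma sgn_eq_C {n : ℕ} (σ : Finset (Fin n)) (i : Fin n) :
    sgn σ i = C ((-1 : ℝ) ^ (σ.filter (fun j => j < i)).card) := by
  simp [sgn]

lemma pderiv_sgn_mul {n : ℕ} (τ : Finset (Fin n)) (k : Fin n) {i j : Fin n}
    (f : MvPolynomial (Fin n) ℝ) (h : j ≠ i) :
    pderiv i (sgn τ k * X j * f) = sgn τ k * X j * pderiv i f := by
  rw [sgn_eq_C, mul_assoc, pderiv_C_mul, pderiv_mul, pderiv_X_of_ne h, zero_mul, zero_add,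
    mul_assoc]

lemma pderiv_sgn_mul_self {n : ℕ} (τ : Finset (Fin n)) (k i : Fin n)
    (f : MvPolynomial (Fin n) ℝ) :
    pderiv i (sgn τ k * X i * f) = sgn τ k * (f + X i * pderiv i f) := by
  rw [sgn_eq_C, mul_assoc, pderiv_C_mul, pderiv_mul, pderiv_X_self, one_mul, mul_add]

lemma koszul_apply {n : ℕ} (ω : PolyForm n) (σ : Finset (Fin n)) :
    koszul n ω σ = ∑ i ∈ σᶜ, sgn σ i * X i * ω (insert i σ) := rfl

lemma extD_apply {n : ℕ} (ω : PolyForm n) (σ : Finset (Fin n)) :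
    extD n ω σ = ∑ i ∈ σ, sgn σ i * pderiv i (ω (σ.erase i)) := rfl

lemma koszul_koszul {n : ℕ} (ω : PolyForm n) : koszul n (koszul n ω) = 0 := by
  classical
  funext σ
  rw [koszul_apply]
  set f : Fin n → Fin n → MvPolynomial (Fin n) ℝ := fun i j =>
    sgn σ i * X i * (sgn (insert i σ) j * X j * ω (insert j (insert i σ))) with hf
  have hS : ∑ i ∈ σᶜ, sgn σ i * X i * koszul n ω (insert i σ)
      = ∑ i ∈ σᶜ, ∑ j ∈ σᶜ.erase i, f i j := by
    refine Finset.sum_congr rfl fun i hi => ?_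
    rw [koszul_apply, Finset.compl_insert, Finset.mul_sum]
  rw [hS]
  have hanti : ∀ i ∈ σᶜ, ∀ j ∈ σᶜ.erase i, f i j = - f j i := by
    intro i hi j hj
    obtain ⟨hne, hjc⟩ := Finset.mem_erase.1 hj
    have hic : i ∉ σ := Finset.mem_compl.1 hi
    have hjs : j ∉ σ := Finset.mem_compl.1 hjc
    have key := sgn_skew_out hic hjs (Ne.symm hne)
    simp only [hf]
    rw [show insert j (insert i σ) = insert i (insert j σ) from Finset.insert_comm _ _ _]
    linear_combination (X i * X j * ω (insert i (insert j σ))) * key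
  have h1 : ∑ i ∈ σᶜ, ∑ j ∈ σᶜ.erase i, f i j = - ∑ i ∈ σᶜ, ∑ j ∈ σᶜ.erase i, f j i := by
    rw [← Finset.sum_neg_distrib]
    refine Finset.sum_congr rfl fun i hi => ?_
    rw [← Finset.sum_neg_distrib]
    exact Finset.sum_congr rfl fun j hj => hanti i hi j hj
  have h2 : ∑ i ∈ σᶜ, ∑ j ∈ σᶜ.erase i, f j i = ∑ j ∈ σᶜ, ∑ i ∈ σᶜ.erase j, f j i := by
    refine Finset.sum_comm' fun x y => ?_
    simp only [Finset.mem_erase, Finset.mem_compl]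
    constructor
    · rintro ⟨hx, hy1, hy2⟩; exact ⟨⟨fun h => hy1 (h ▸ rfl), hx⟩, hy2⟩
    · rintro ⟨⟨hx1, hx2⟩, hy⟩; exact ⟨hx2, fun h => hx1 (h ▸ rfl), hy⟩
  have h3 : ∑ i ∈ σᶜ, ∑ j ∈ σᶜ.erase i, f i j = 0 := by
    have := h1.trans (by rw [h2])
    exact add_self_eq_zero.mp (by linear_combination this)
  rw [h3]; rfl

lemma homotopy {n : ℕ} (ω : PolyForm n) (σ : Finset (Fin n)) :
    extD n (koszul n ω) σ + koszul n (extD n ω) σ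
      = σ.card • ω σ + ∑ i : Fin n, X i * pderiv i (ω σ) := by
  classical
  have hA : extD n (koszul n ω) σ
      = (∑ i ∈ σ, (ω σ + X i * pderiv i (ω σ)))
        + ∑ i ∈ σ, ∑ j ∈ σᶜ, sgn σ i * sgn (σ.erase i) j *
            (X j * pderiv i (ω (insert j (σ.erase i)))) := by
    rw [extD_apply, ← Finset.sum_add_distrib]
    refine Finset.sum_congr rfl fun i hi => ?_
    rw [koszul_apply, Finset.compl_erase,
      Finset.sum_insert (by simp [hi]), Finset.insert_erase hi, sgn_erase_self,
      map_add, map_sum, mul_add]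
    congr 1
    · rw [pderiv_sgn_mul_self]
      have := sgn_mul_self σ i
      linear_combination (ω σ + X i * pderiv i (ω σ)) * this
    · rw [Finset.mul_sum]
      refine Finset.sum_congr rfl fun j hj => ?_
      have hji : j ≠ i := fun h => (Finset.mem_compl.1 hj) (h ▸ hi)
      rw [pderiv_sgn_mul _ _ _ hji]
      ring
  have hB : koszul n (extD n ω) σ
      = (∑ i ∈ σᶜ, X i * pderiv i (ω σ))
        + ∑ i ∈ σᶜ, ∑ j ∈ σ, sgn σ i * sgn (insert i σ) j *
            (X i * pderiv j (ω ((insert i σ).erase j))) := by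
    rw [koszul_apply, ← Finset.sum_add_distrib]
    refine Finset.sum_congr rfl fun i hi => ?_
    have hiσ : i ∉ σ := Finset.mem_compl.1 hi
    rw [extD_apply, Finset.sum_insert hiσ, Finset.erase_insert hiσ, sgn_insert_self,
      mul_add, Finset.mul_sum]
    congr 1
    · have := sgn_mul_self σ i
      linear_combination (X i * pderiv i (ω σ)) * this
    · exact Finset.sum_congr rfl fun j hj => by ring
  have hcross : ∑ i ∈ σ, ∑ j ∈ σᶜ, sgn σ i * sgn (σ.erase i) j *
            (X j * pderiv i (ω (insert j (σ.erase i))))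
      = - ∑ i ∈ σᶜ, ∑ j ∈ σ, sgn σ i * sgn (insert i σ) j *
            (X i * pderiv j (ω ((insert i σ).erase j))) := by
    rw [Finset.sum_comm (s := σᶜ)]
    rw [← Finset.sum_neg_distrib]
    refine Finset.sum_congr rfl fun i hi => ?_
    rw [← Finset.sum_neg_distrib]
    refine Finset.sum_congr rfl fun j hj => ?_
    have hjc : j ∉ σ := Finset.mem_compl.1 hj
    have hij : i ≠ j := fun h => hjc (h ▸ hi)
    have hset : (insert j σ).erase i = insert j (σ.erase i) :=
      Finset.erase_insert_of_ne (Ne.symm hij)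
    rw [hset]
    have key := sgn_skew_cross hi hjc
    linear_combination (X j * pderiv i (ω (insert j (σ.erase i)))) * key
  rw [hA, hB, hcross]
  rw [Finset.sum_add_distrib, Finset.sum_const]
  rw [show ∑ i : Fin n, X i * pderiv i (ω σ)
      = (∑ i ∈ σ, X i * pderiv i (ω σ)) + ∑ i ∈ σᶜ, X i * pderiv i (ω σ) from
    (Finset.sum_add_sum_compl σ _).symm]
  abel

lemma euler {n : ℕ} (α : Fin n →₀ ℕ) :
    ∑ i : Fin n, X i * pderiv i (monomial α (1 : ℝ)) = (mdeg α) • monomial α (1 : ℝ) := by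
  have h : ∀ i : Fin n, X i * pderiv i (monomial α (1 : ℝ)) = monomial α ((α i : ℝ)) := by
    intro i
    rw [pderiv_monomial, one_mul]
    by_cases h0 : α i = 0
    · simp [h0]
    · rw [show (X i : MvPolynomial (Fin n) ℝ) = monomial (Finsupp.single i 1) 1 from
        by rw [← X_pow_eq_monomial, pow_one], monomial_mul, one_mul]
      rw [add_tsub_cancel_of_le (Finsupp.single_le_iff.2 (Nat.one_le_iff_ne_zero.2 h0))]
  rw [Finset.sum_congr rfl fun i _ => h i, ← map_sum, ← Nat.cast_sum]
  have hm : mdeg α = ∑ i : Fin n, α i := by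
    rw [mdeg, Finsupp.sum_fintype]
    intro; rfl
  rw [← hm, ← map_nsmul]
  congr 1
  simp [nsmul_eq_mul]

lemma homotopy_formMonomial {n : ℕ} (α : Fin n →₀ ℕ) (σ : Finset (Fin n)) :
    extD n (koszul n (formMonomial α σ)) + koszul n (extD n (formMonomial α σ))
      = ((mdeg α + σ.card : ℕ) : ℝ) • formMonomial α σ := by
  funext τ
  have h := homotopy (formMonomial α σ) τ
  rw [Pi.add_apply] at *
  rw [h, Pi.smul_apply]
  by_cases hτ : τ = σ
  · subst hτ
    rw [show formMonomial α τ τ = monomial α 1 from if_pos rfl]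
    rw [euler]
    rw [← Nat.cast_smul_eq_nsmul ℝ, ← Nat.cast_smul_eq_nsmul ℝ (mdeg α), ← add_smul]
    rw [← Nat.cast_add, add_comm (mdeg α)]
  · rw [show formMonomial α σ τ = 0 from if_neg hτ]
    simp

lemma koszul_extD_koszul {n : ℕ} (α : Fin n →₀ ℕ) (σ : Finset (Fin n)) :
    koszul n (extD n (koszul n (formMonomial α σ)))
      = ((mdeg α + σ.card : ℕ) : ℝ) • koszul n (formMonomial α σ) := by
  have h := homotopy_formMonomial α σ
  have h2 : extD n (koszul n (formMonomial α σ))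
      = ((mdeg α + σ.card : ℕ) : ℝ) • formMonomial α σ
        - koszul n (extD n (formMonomial α σ)) := eq_sub_of_add_eq h
  rw [h2, map_sub, map_smul, koszul_koszul, sub_zero]

end Aux

/-- `κ d J_rΛ^k(ℝ^n) = J_rΛ^k(ℝ^n)`. -/
theorem koszul_extD_Jspace (n r k : ℕ) :
    Submodule.map (koszul n) (Submodule.map (extD n) (Jspace n r k)) = Jspace n r k := by
  unfold Jspace
  rw [Submodule.map_iSup, Submodule.map_iSup]
  refine iSup_congr fun l => ?_
  unfold Hl
  rw [Submodule.map_span, Submodule.map_span, Submodule.map_span, ← Set.image_comp,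
    ← Set.image_comp]
  apply le_antisymm
  · rw [Submodule.span_le]
    rintro _ ⟨ω, ⟨α, σ, hσ, hα, hl, rfl⟩, rfl⟩
    simp only [Function.comp_apply]
    rw [koszul_extD_koszul]
    exact Submodule.smul_mem _ _
      (Submodule.subset_span ⟨formMonomial α σ, ⟨α, σ, hσ, hα, hl, rfl⟩, rfl⟩)
  · rw [Submodule.span_le]
    rintro _ ⟨ω, ⟨α, σ, hσ, hα, hl, rfl⟩, rfl⟩
    have hc : ((mdeg α + σ.card : ℕ) : ℝ) ≠ 0 := Nat.cast_ne_zero.2 (by omega)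
    have h : koszul n (formMonomial α σ)
        = ((mdeg α + σ.card : ℕ) : ℝ)⁻¹ •
            koszul n (extD n (koszul n (formMonomial α σ))) := by
      rw [koszul_extD_koszul, smul_smul, inv_mul_cancel₀ hc, one_smul]
    rw [h]
    refine Submodule.smul_mem _ _ (Submodule.subset_span ?_)
    exact ⟨formMonomial α σ, ⟨α, σ, hσ, hα, hl, rfl⟩, rfl⟩
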